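/- Let r(n,x) = C_{n+1}·x − C_{n+2}. Then det((r(i+j, x²))_{i,j=0}^{n}) = F_{2n+4}(x, −1)/x, i.e., x·det((r(i+j,x²))_{i,j=0}^{n}) = F_{2n+4}(x,−1) as polynomials. -/

import Mathlib

open Polynomial Finset

namespace ShiftedCatalanAux

def b : ℕ → ℕ → ℚ
  | 0, 0 => 1
  | 0, _+1 => 0
  | m+1, 0 => 2 * b m 0 + b m 1
  | m+1, k+1 => b m k + 2 * b m (k+1) + b m (k+2)

lemma b_eq_zero : ∀ m k, m < k → b m k = 0 := by
  intro m
  induction m with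
  | zero =>
    rintro (_ | k) hk
    · omega
    · rfl
  | succ m ih =>
    rintro (_ | k) hk
    · omega
    · show b m k + 2 * b m (k+1) + b m (k+2) = 0
      rw [ih k (by omega), ih (k+1) (by omega), ih (k+2) (by omega)]; ring

lemma b_succ (m k : ℕ) :
    b (m+1) k = (if k = 0 then 0 else b m (k-1)) + 2 * b m k + b m (k+1) := by
  cases k with
  | zero => show 2 * b m 0 + b m 1 = _; simp
  | succ k => show b m k + 2 * b m (k+1) + b m (k+2) = _; simp

lemma b_diag : ∀ m, b m m = 1 := by
  intro m
  induction m with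
  | zero => rfl
  | succ m ih =>
    show b m m + 2 * b m (m+1) + b m (m+2) = 1
    rw [ih, b_eq_zero m (m+1) (by omega), b_eq_zero m (m+2) (by omega)]; ring

lemma b_conv : ∀ m k, b (m+1) (k+1) = ∑ j ∈ range (m+1), b j 0 * b (m - j) k := by
  intro m
  induction m with
  | zero =>
    intro k
    show b 0 k + 2 * b 0 (k+1) + b 0 (k+2) = _
    rw [b_eq_zero 0 (k+1) (by omega), b_eq_zero 0 (k+2) (by omega)]
    simp [b]
  | succ m ih =>
    intro k
    have e1 : b (m+2) (k+1) = b (m+1) k + 2 * b (m+1) (k+1) + b (m+1) (k+2) := rfl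
    cases k with
    | zero =>
      rw [e1]
      have e0 : b (m+1) 0 = 2 * b m 0 + b m 1 := rfl
      rw [ih 0, ih 1, Finset.sum_range_succ (fun j => b j 0 * b (m+1-j) 0)]
      rw [Nat.sub_self, e0]
      have : ∑ j ∈ range (m+1), b j 0 * b (m+1-j) 0
          = ∑ j ∈ range (m+1), (b j 0 * b (m-j) 0 * 2 + b j 0 * b (m-j) 1) := by
        apply Finset.sum_congr rfl
        intro j hj
        have hj' : j ≤ m := by simpa using Nat.lt_succ_iff.mp (Finset.mem_range.mp hj)
        have : m + 1 - j = (m - j) + 1 := by omega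
        rw [this]
        show b j 0 * (2 * b (m-j) 0 + b (m-j) 1) = _
        ring
      rw [this, Finset.sum_add_distrib, ← Finset.sum_mul]
      have hb00 : b 0 0 = 1 := rfl
      rw [hb00]
      ring
    | succ s =>
      rw [e1, ih s, ih (s+1), ih (s+2)]
      rw [Finset.sum_range_succ (fun j => b j 0 * b (m+1-j) (s+1))]
      rw [Nat.sub_self, b_eq_zero 0 (s+1) (by omega)]
      have key : ∑ j ∈ range (m+1), b j 0 * b (m+1-j) (s+1)
          = ∑ j ∈ range (m+1), (b j 0 * b (m-j) s + 2 * (b j 0 * b (m-j) (s+1)) + b j 0 * b (m-j) (s+2)) := by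
        apply Finset.sum_congr rfl
        intro j hj
        have hj' : j ≤ m := Nat.lt_succ_iff.mp (Finset.mem_range.mp hj)
        have h2 : m + 1 - j = (m - j) + 1 := by omega
        rw [h2]
        show b j 0 * (b (m-j) s + 2 * b (m-j) (s+1) + b (m-j) (s+2)) = _
        ring
      rw [key, Finset.sum_add_distrib, Finset.sum_add_distrib, ← Finset.mul_sum]
      ring

lemma catalan_rec (r : ℕ) : catalan (r+3) =
    2 * catalan (r+2) + ∑ i ∈ range (r+1), catalan (i+1) * catalan (r+1-i) := by
  have h := catalan_succ (r+2)
  rw [Fin.sum_univ_eq_sum_range (fun i => catalan i * catalan (r+2-i)) (r+3)] at h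
  rw [h, Finset.sum_range_succ (fun i => catalan i * catalan (r+2-i)),
    Finset.sum_range_succ' (fun i => catalan i * catalan (r+2-i)) (r+1)]
  have e : ∀ i ∈ range (r+1), catalan (i+1) * catalan (r+2-(i+1)) = catalan (i+1) * catalan (r+1-i) := by
    intro i hi
    congr 2
    omega
  rw [Finset.sum_congr rfl e]
  simp [catalan_zero]
  omega

lemma b_zero_catalan : ∀ m, b m 0 = (catalan (m+1) : ℚ) := by
  intro m
  induction m using Nat.strong_induction_on with
  | _ m ih =>
    match m with
    | 0 => simp [b, catalan_one]
    | 1 =>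
      show (2 * b 0 0 + b 0 1 : ℚ) = (catalan 2 : ℚ)
      have : catalan 2 = 2 := catalan_two
      rw [this]
      show (2 * 1 + 0 : ℚ) = (2:ℚ)
      norm_num
    | (r+2) =>
      have h1 : b (r+2) 0 = 2 * b (r+1) 0 + b (r+1) 1 := rfl
      have h2 : b (r+1) 1 = ∑ j ∈ range (r+1), b j 0 * b (r-j) 0 := b_conv r 0
      rw [h1, h2, ih (r+1) (by omega)]
      have h3 : ∑ j ∈ range (r+1), b j 0 * b (r-j) 0
          = ∑ j ∈ range (r+1), ((catalan (j+1) : ℚ) * (catalan (r+1-j) : ℚ)) := by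
        apply Finset.sum_congr rfl
        intro j hj
        have hj' : j ≤ r := Nat.lt_succ_iff.mp (Finset.mem_range.mp hj)
        rw [ih j (by omega), ih (r-j) (by omega)]
        congr 3
        omega
      rw [h3]
      have h4 := catalan_rec r
      have h5 : (catalan (r+3) : ℚ)
          = 2 * (catalan (r+2) : ℚ) + ∑ i ∈ range (r+1), ((catalan (i+1):ℚ) * (catalan (r+1-i):ℚ)) := by
        rw [h4]
        push_cast
        ring
      rw [h5]

def t (k l : ℕ) : ℚ := if k = l then 2 else if k = l + 1 ∨ l = k + 1 then 1 else 0

lemma t_symm (k l : ℕ) : t k l = t l k := by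
  unfold t
  split_ifs <;> first | rfl | omega

lemma tsum (j k N : ℕ) (hj : j ≤ N) (hk : k ≤ N) :
    ∑ l ∈ range (N+1), t k l * b j l = b (j+1) k := by
  have pointwise : ∀ l, t k l * b j l =
      (if l = k then 2 * b j l else 0) + (if l = k + 1 then b j l else 0)
        + (if k = l + 1 then b j l else 0) := by
    intro l
    unfold t
    split_ifs <;> first | ring1 | (exfalso; omega)
  rw [Finset.sum_congr rfl (fun l _ => pointwise l)]
  rw [Finset.sum_add_distrib, Finset.sum_add_distrib]
  rw [Finset.sum_ite_eq' (range (N+1)) k (fun l => 2 * b j l)]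
  rw [Finset.sum_ite_eq' (range (N+1)) (k+1) (fun l => b j l)]
  have hmem : k ∈ range (N+1) := Finset.mem_range.mpr (by omega)
  rw [if_pos hmem]
  have h2 : (if k + 1 ∈ range (N+1) then b j (k+1) else 0) = b j (k+1) := by
    split_ifs with h
    · rfl
    · rw [b_eq_zero j (k+1) (by simp at h; omega)]
  rw [h2]
  have h3 : (∑ l ∈ range (N+1), if k = l + 1 then b j l else 0)
      = (if k = 0 then 0 else b j (k-1)) := by
    cases k with
    | zero => simp
    | succ s =>
      have : ∀ l, (if s + 1 = l + 1 then b j l else 0) = (if l = s then b j l else 0) := by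
        intro l; split_ifs <;> first | rfl | omega
      rw [Finset.sum_congr rfl (fun l _ => this l)]
      rw [Finset.sum_ite_eq' (range (N+1)) s (fun l => b j l)]
      rw [if_pos (Finset.mem_range.mpr (by omega))]
      simp
  rw [h3, b_succ]
  ring

lemma sum_trunc (i N : ℕ) (h : i ≤ N) (g : ℕ → ℚ) :
    ∑ k ∈ range (N+1), b i k * g k = ∑ k ∈ range (i+1), b i k * g k := by
  symm
  apply Finset.sum_subset
  · intro x hx
    simp at hx ⊢
    omega
  · intro x hx hnx
    simp at hx hnx
    rw [b_eq_zero i x (by omega)]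
    ring

lemma shift (i j N : ℕ) (hi : i ≤ N) (hj : j ≤ N) :
    ∑ k ∈ range (N+1), b (i+1) k * b j k = ∑ k ∈ range (N+1), b i k * b (j+1) k := by
  have h1 : ∀ k ∈ range (N+1), b (i+1) k * b j k = (∑ l ∈ range (N+1), t k l * b i l) * b j k := by
    intro k hk
    rw [tsum i k N hi (by simpa using Nat.lt_succ_iff.mp (Finset.mem_range.mp hk))]
  rw [Finset.sum_congr rfl h1]
  simp only [Finset.sum_mul]
  rw [Finset.sum_comm]
  apply Finset.sum_congr rfl
  intro l hl
  have h2 : ∑ k ∈ range (N+1), t k l * b i l * b j k = b i l * ∑ k ∈ range (N+1), t l k * b j k := by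
    rw [Finset.mul_sum]
    apply Finset.sum_congr rfl
    intro k hk
    rw [t_symm]
    ring
  rw [h2, tsum j l N hj (by simpa using Nat.lt_succ_iff.mp (Finset.mem_range.mp hl))]

lemma sum_id_aux : ∀ i j N, i + j ≤ N →
    ∑ k ∈ range (N+1), b i k * b j k = (catalan (i+j+1) : ℚ) := by
  intro i
  induction i with
  | zero =>
    intro j N hN
    have : ∀ k ∈ range (N+1), b 0 k * b j k = (if k = 0 then b j k else 0) := by
      intro k hk
      cases k with
      | zero => show b 0 0 * b j 0 = b j 0; show (1:ℚ) * _ = _; ring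
      | succ s => show b 0 (s+1) * b j (s+1) = _; show (0:ℚ) * _ = _; simp
    rw [Finset.sum_congr rfl this, Finset.sum_ite_eq' (range (N+1)) 0 (fun k => b j k)]
    rw [if_pos (Finset.mem_range.mpr (by omega))]
    rw [b_zero_catalan j]
    norm_num
  | succ i ih =>
    intro j N hN
    rw [shift i j N (by omega) (by omega), ih (j+1) N (by omega)]
    congr 2
    omega

lemma sum_id (i j N : ℕ) (hi : i ≤ N) :
    ∑ k ∈ range (N+1), b i k * b j k = (catalan (i+j+1) : ℚ) := by
  rw [sum_trunc i N hi (fun k => b j k)]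
  rcases le_or_gt (i+j) N with h | h
  · rw [← sum_trunc i N hi (fun k => b j k)]
    exact sum_id_aux i j N h
  · rw [← sum_trunc i (i+j) (by omega) (fun k => b j k)]
    exact sum_id_aux i j (i+j) (by omega)

noncomputable def fS (a c : ℕ) : Polynomial ℚ := (if a = c then X^2 else 0) - C (t a c)

noncomputable def Sm (N : ℕ) : Matrix (Fin N) (Fin N) (Polynomial ℚ) :=
  Matrix.of fun k l => fS (k : ℕ) (l : ℕ)

noncomputable def D : ℕ → Polynomial ℚ
  | 0 => X^2 - C 2
  | 1 => (X^2 - C 2) * (X^2 - C 2) - 1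
  | (n+2) => (X^2 - C 2) * D (n+1) - D n

lemma fS_shift (a c : ℕ) : fS (a+1) (c+1) = fS a c := by
  unfold fS t
  split_ifs <;> first | rfl | omega

lemma fS_diag (a : ℕ) : fS a a = X^2 - C 2 := by simp [fS, t]

lemma fS_adj (a : ℕ) : fS a (a+1) = -1 := by
  have h1 : ¬ (a = a + 1) := by omega
  have h2 : a = a + 1 + 1 ∨ a + 1 = a + 1 := Or.inr rfl
  simp [fS, t, h1, h2]

lemma fS_adj' (a : ℕ) : fS (a+1) a = -1 := by
  have h1 : ¬ (a + 1 = a) := by omega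
  have h2 : a + 1 = a + 1 ∨ a = a + 1 + 1 := Or.inl rfl
  simp [fS, t, h1, h2]

lemma fS_far (a c : ℕ) (h : a + 2 ≤ c ∨ c + 2 ≤ a) : fS a c = 0 := by
  have h1 : ¬ (a = c) := by omega
  have h2 : ¬ (a = c + 1 ∨ c = a + 1) := by omega
  simp [fS, t, h1, h2]

lemma Sm_sub (N : ℕ) : (Sm (N+1)).submatrix Fin.succ Fin.succ = Sm N := by
  apply Matrix.ext
  intro i j
  show fS ((Fin.succ i : Fin (N+1)) : ℕ) ((Fin.succ j : Fin (N+1)) : ℕ) = fS i j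
  rw [Fin.val_succ, Fin.val_succ, fS_shift]

lemma detSm : ∀ N, (Sm (N+1)).det = D N := by
  intro N
  induction N using Nat.strong_induction_on with
  | _ N ih =>
    match N with
    | 0 =>
      rw [Matrix.det_fin_one]
      show fS 0 0 = D 0
      rw [fS_diag]; rfl
    | 1 =>
      rw [Matrix.det_fin_two]
      show fS 0 0 * fS 1 1 - fS 0 1 * fS 1 0 = D 1
      rw [fS_diag, fS_diag, fS_adj 0, fS_adj' 0]
      show _ = (X^2 - C 2) * (X^2 - C 2) - 1
      ring
    | (N+2) =>
      rw [Matrix.det_succ_row_zero, Fin.sum_univ_succ, Fin.sum_univ_succ]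
      have hz : ∀ i : Fin (N+1),
          ((-1:Polynomial ℚ)) ^ ((Fin.succ (Fin.succ i) : Fin (N+3)) : ℕ)
            * Sm (N+3) 0 (Fin.succ (Fin.succ i))
            * ((Sm (N+3)).submatrix Fin.succ (Fin.succ (Fin.succ i)).succAbove).det = 0 := by
        intro i
        have : Sm (N+3) 0 (Fin.succ (Fin.succ i)) = 0 := by
          show fS 0 ((Fin.succ (Fin.succ i) : Fin (N+3)) : ℕ) = 0
          rw [Fin.val_succ, Fin.val_succ]
          exact fS_far 0 ((i:ℕ)+1+1) (by omega)
        rw [this]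
        ring
      rw [Finset.sum_congr rfl (fun i _ => hz i), Finset.sum_const_zero]
      -- term j = 0
      have t0 : ((-1:Polynomial ℚ)) ^ ((0 : Fin (N+3)) : ℕ) * Sm (N+3) 0 0
          * ((Sm (N+3)).submatrix Fin.succ (Fin.succAbove 0)).det
          = (X^2 - C 2) * D (N+1) := by
        rw [Fin.succAbove_zero, Sm_sub, ih (N+1) (by omega)]
        show (-1:Polynomial ℚ)^(0:ℕ) * fS 0 0 * _ = _
        rw [fS_diag]
        ring
      -- term j = 1
      have t1 : ((-1:Polynomial ℚ)) ^ ((Fin.succ (0 : Fin (N+2)) : Fin (N+3)) : ℕ)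
          * Sm (N+3) 0 (Fin.succ 0)
          * ((Sm (N+3)).submatrix Fin.succ (Fin.succ (0 : Fin (N+2))).succAbove).det
          = - D N := by
        have hval : ((Fin.succ (0 : Fin (N+2)) : Fin (N+3)) : ℕ) = 1 := by simp
        have hS01 : Sm (N+3) 0 (Fin.succ 0) = -1 := by
          show fS 0 ((Fin.succ (0 : Fin (N+2)) : Fin (N+3)) : ℕ) = -1
          rw [hval]
          exact fS_adj 0
        set A : Matrix (Fin (N+2)) (Fin (N+2)) (Polynomial ℚ) :=
          (Sm (N+3)).submatrix Fin.succ (Fin.succ (0 : Fin (N+2))).succAbove with hA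
        have hdetA : A.det = - D N := by
          rw [Matrix.det_succ_column_zero, Fin.sum_univ_succ]
          have hz2 : ∀ i : Fin (N+1),
              ((-1:Polynomial ℚ)) ^ ((Fin.succ i : Fin (N+2)) : ℕ) * A (Fin.succ i) 0
                * (A.submatrix (Fin.succ i).succAbove Fin.succ).det = 0 := by
            intro i
            have : A (Fin.succ i) 0 = 0 := by
              show Sm (N+3) (Fin.succ (Fin.succ i)) ((Fin.succ (0 : Fin (N+2))).succAbove 0) = 0
              rw [Fin.succ_succAbove_zero]
              show fS ((Fin.succ (Fin.succ i) : Fin (N+3)) : ℕ) 0 = 0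
              rw [Fin.val_succ, Fin.val_succ]
              exact fS_far ((i:ℕ)+1+1) 0 (by omega)
            rw [this]
            ring
          rw [Finset.sum_congr rfl (fun i _ => hz2 i), Finset.sum_const_zero]
          have hA00 : A 0 0 = -1 := by
            show Sm (N+3) (Fin.succ 0) ((Fin.succ (0 : Fin (N+2))).succAbove 0) = -1
            rw [Fin.succ_succAbove_zero]
            show fS ((Fin.succ (0 : Fin (N+2)) : Fin (N+3)) : ℕ) ((0 : Fin (N+3)) : ℕ) = -1
            have h1 : ((Fin.succ (0 : Fin (N+2)) : Fin (N+3)) : ℕ) = 1 := by simp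
            have h2 : ((0 : Fin (N+3)) : ℕ) = 0 := rfl
            rw [h1, h2]
            exact fS_adj' 0
          have hB2 : A.submatrix ((0 : Fin (N+2)).succAbove) Fin.succ = Sm (N+1) := by
            apply Matrix.ext
            intro i j
            show Sm (N+3) (Fin.succ ((0 : Fin (N+2)).succAbove i))
                ((Fin.succ (0 : Fin (N+2))).succAbove (Fin.succ j)) = _
            rw [Fin.succAbove_zero, Fin.succ_succAbove_succ, Fin.succAbove_zero]
            show fS ((Fin.succ (Fin.succ i) : Fin (N+3)) : ℕ)
                ((Fin.succ (Fin.succ j) : Fin (N+3)) : ℕ) = fS (i : ℕ) (j : ℕ)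
            rw [Fin.val_succ, Fin.val_succ, Fin.val_succ, Fin.val_succ, fS_shift, fS_shift]
          rw [hA00, hB2, ih N (by omega)]
          show (-1:Polynomial ℚ)^((0:Fin (N+2)):ℕ) * (-1) * D N + 0 = - D N
          norm_num
        rw [hS01, hval, hdetA]
        ring
      rw [t0, t1]
      show _ = D (N+2)
      have : D (N+2) = (X^2 - C 2) * D (N+1) - D N := rfl
      rw [this]
      ring

noncomputable def Bm (n : ℕ) : Matrix (Fin (n+1)) (Fin (n+1)) (Polynomial ℚ) :=
  Matrix.of fun i k => C (b (i : ℕ) (k : ℕ))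

noncomputable def Tm (n : ℕ) : Matrix (Fin (n+1)) (Fin (n+1)) (Polynomial ℚ) :=
  Matrix.of fun k l => C (t (k : ℕ) (l : ℕ))

lemma BBt (n : ℕ) (i j : Fin (n+1)) :
    (Bm n * (Bm n).transpose) i j = C ((catalan ((i:ℕ)+(j:ℕ)+1) : ℚ)) := by
  rw [Matrix.mul_apply]
  have h : ∀ k : Fin (n+1), Bm n i k * (Bm n).transpose k j = C (b (i:ℕ) (k:ℕ) * b (j:ℕ) (k:ℕ)) := by
    intro k
    show C (b (i:ℕ) (k:ℕ)) * C (b (j:ℕ) (k:ℕ)) = _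
    rw [← C_mul]
  rw [Finset.sum_congr rfl (fun k _ => h k), ← map_sum]
  congr 1
  rw [Fin.sum_univ_eq_sum_range (fun k => b (i:ℕ) k * b (j:ℕ) k) (n+1)]
  exact sum_id (i:ℕ) (j:ℕ) n (Nat.lt_succ_iff.mp i.isLt)

lemma TBt (n : ℕ) (k j : Fin (n+1)) :
    (Tm n * (Bm n).transpose) k j = C (b ((j:ℕ)+1) (k:ℕ)) := by
  rw [Matrix.mul_apply]
  have h : ∀ l : Fin (n+1), Tm n k l * (Bm n).transpose l j = C (t (k:ℕ) (l:ℕ) * b (j:ℕ) (l:ℕ)) := by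
    intro l
    show C (t (k:ℕ) (l:ℕ)) * C (b (j:ℕ) (l:ℕ)) = _
    rw [← C_mul]
  rw [Finset.sum_congr rfl (fun l _ => h l), ← map_sum]
  congr 1
  rw [Fin.sum_univ_eq_sum_range (fun l => t (k:ℕ) l * b (j:ℕ) l) (n+1)]
  exact tsum (j:ℕ) (k:ℕ) n (Nat.lt_succ_iff.mp j.isLt) (Nat.lt_succ_iff.mp k.isLt)

lemma BTBt (n : ℕ) (i j : Fin (n+1)) :
    (Bm n * (Tm n * (Bm n).transpose)) i j = C ((catalan ((i:ℕ)+(j:ℕ)+2) : ℚ)) := by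
  rw [Matrix.mul_apply]
  have h : ∀ k : Fin (n+1), Bm n i k * (Tm n * (Bm n).transpose) k j
      = C (b (i:ℕ) (k:ℕ) * b ((j:ℕ)+1) (k:ℕ)) := by
    intro k
    rw [TBt]
    show C (b (i:ℕ) (k:ℕ)) * C (b ((j:ℕ)+1) (k:ℕ)) = _
    rw [← C_mul]
  rw [Finset.sum_congr rfl (fun k _ => h k), ← map_sum]
  congr 1
  rw [Fin.sum_univ_eq_sum_range (fun k => b (i:ℕ) k * b ((j:ℕ)+1) k) (n+1)]
  rw [sum_id (i:ℕ) ((j:ℕ)+1) n (Nat.lt_succ_iff.mp i.isLt)]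
  congr 2

lemma hSplit (n : ℕ) : Sm (n+1)
    = (X^2 : Polynomial ℚ) • (1 : Matrix (Fin (n+1)) (Fin (n+1)) (Polynomial ℚ)) - Tm n := by
  apply Matrix.ext
  intro k l
  show fS (k:ℕ) (l:ℕ) = ((X^2 : Polynomial ℚ) • (1 : Matrix (Fin (n+1)) (Fin (n+1)) (Polynomial ℚ))) k l - C (t (k:ℕ) (l:ℕ))
  unfold fS
  congr 1
  rw [Matrix.smul_apply]
  by_cases h : k = l
  · subst h
    rw [if_pos rfl, Matrix.one_apply_eq, smul_eq_mul, mul_one]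
  · rw [if_neg (fun hv => h (Fin.val_injective hv)), Matrix.one_apply_ne h, smul_eq_mul, mul_zero]

lemma Mfact (n : ℕ) :
    (Matrix.of fun i j : Fin (n + 1) =>
        C ((catalan ((i : ℕ) + (j : ℕ) + 1) : ℚ)) * X ^ 2
          - C ((catalan ((i : ℕ) + (j : ℕ) + 2) : ℚ)))
      = Bm n * Sm (n+1) * (Bm n).transpose := by
  rw [hSplit, Matrix.mul_sub, Matrix.mul_smul, Matrix.mul_one, Matrix.sub_mul, Matrix.smul_mul]
  apply Matrix.ext
  intro i j
  rw [Matrix.sub_apply, Matrix.smul_apply, BBt, Matrix.mul_assoc, BTBt]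
  show C ((catalan ((i:ℕ)+(j:ℕ)+1) : ℚ)) * X ^ 2 - C ((catalan ((i:ℕ)+(j:ℕ)+2) : ℚ)) = _
  rw [smul_eq_mul]
  ring

lemma detBm (n : ℕ) : (Bm n).det = 1 := by
  have h : (Bm n).BlockTriangular OrderDual.toDual := by
    intro i j hij
    show C (b (i:ℕ) (j:ℕ)) = 0
    rw [b_eq_zero (i:ℕ) (j:ℕ) hij, map_zero]
  rw [Matrix.det_of_lowerTriangular _ h]
  have h2 : ∀ i : Fin (n+1), Bm n i i = 1 := by
    intro i
    show C (b (i:ℕ) (i:ℕ)) = 1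
    rw [b_diag, map_one]
  rw [Finset.prod_congr rfl (fun i _ => h2 i), Finset.prod_const_one]

lemma detM (n : ℕ) :
    (Matrix.of fun i j : Fin (n + 1) =>
        C ((catalan ((i : ℕ) + (j : ℕ) + 1) : ℚ)) * X ^ 2
          - C ((catalan ((i : ℕ) + (j : ℕ) + 2) : ℚ))).det = D n := by
  rw [Mfact, Matrix.det_mul, Matrix.det_mul, Matrix.det_transpose, detBm, detSm]
  ring

lemma Fstep (F : ℕ → Polynomial ℚ) (hF : ∀ m, F (m + 2) = X * F (m + 1) - F m) (m : ℕ) :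
    F (m+4) = (X^2 - C 2) * F (m+2) - F m := by
  have hC2 : (C 2 : Polynomial ℚ) = 2 := map_ofNat C 2
  have h1 : F (m+4) = X * F (m+3) - F (m+2) := by
    have := hF (m+2)
    convert this using 3

  have h2 : F (m+3) = X * F (m+2) - F (m+1) := by
    have := hF (m+1)
    convert this using 3

  have h3 : F (m+2) = X * F (m+1) - F m := hF m
  rw [hC2]
  linear_combination h1 + X * h2 + h3

lemma XD (F : ℕ → Polynomial ℚ) (hF0 : F 0 = 0) (hF1 : F 1 = 1)
    (hF : ∀ m, F (m + 2) = X * F (m + 1) - F m) : ∀ m, X * D m = F (2*m+4) := by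
  have e2 : F 2 = X := by
    have := hF 0
    rw [hF0, hF1] at this
    simpa using this
  have e3 : F 3 = X^2 - 1 := by
    have := hF 1
    rw [e2, hF1] at this
    rw [this]
    ring
  have e4 : F 4 = X^3 - 2*X := by
    have := hF 2
    rw [e2, e3] at this
    rw [this]
    ring
  have hC2 : (C 2 : Polynomial ℚ) = 2 := map_ofNat C 2
  intro m
  induction m using Nat.strong_induction_on with
  | _ m ih =>
    match m with
    | 0 =>
      show X * (X^2 - C 2) = F 4
      rw [e4, hC2]
      ring
    | 1 =>
      show X * ((X^2 - C 2) * (X^2 - C 2) - 1) = F 6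
      have h6 : F 6 = (X^2 - C 2) * F 4 - F 2 := Fstep F hF 2
      rw [h6, e4, e2, hC2]
      ring
    | (s+2) =>
      have hD : D (s+2) = (X^2 - C 2) * D (s+1) - D s := rfl
      have hs : F (2*(s+2)+4) = (X^2 - C 2) * F (2*(s+1)+4) - F (2*s+4) := by
        have := Fstep F hF (2*s+4)
        convert this using 3
        all_goals ring_nf

      rw [hD, hs, ← ih (s+1) (by omega), ← ih s (by omega)]
      ring

end ShiftedCatalanAux

theorem shifted_catalan_linear_hankel_det_fib_poly (n : ℕ)
    (F : ℕ → Polynomial ℚ)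
    (hF0 : F 0 = 0) (hF1 : F 1 = 1)
    (hF : ∀ m, F (m + 2) = X * F (m + 1) - F m) :
    X * (Matrix.of fun i j : Fin (n + 1) =>
        Polynomial.C (catalan ((i : ℕ) + (j : ℕ) + 1) : ℚ) * X ^ 2
          - Polynomial.C (catalan ((i : ℕ) + (j : ℕ) + 2) : ℚ)).det
      = F (2 * n + 4) := by
  rw [ShiftedCatalanAux.detM n]
  exact ShiftedCatalanAux.XD F hF0 hF1 hF n
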